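/- Let X_1, ..., X_n be independent positive random variables with finite second moment, and let X = Σ X_i. Then for any t > 0, Pr[X ≤ E[X] − t] ≤ exp(−t² / (2 Σ_{i=1}^n E[X_i²])). -/

import Mathlib

open MeasureTheory ProbabilityTheory Finset

lemma exp_neg_le_quadratic {x : ℝ} (hx : 0 ≤ x) :
    Real.exp (-x) ≤ 1 - x + x ^ 2 / 2 := by
  set g : ℝ → ℝ := fun y => 1 - y + y ^ 2 / 2 - Real.exp (-y) with hg
  have hderiv : ∀ y : ℝ, HasDerivAt g (-1 + y + Real.exp (-y)) y := by
    intro y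
    have h1 : HasDerivAt (fun y : ℝ => 1 - y) (0 - 1) y :=
      (hasDerivAt_const y (1 : ℝ)).sub (hasDerivAt_id y)
    have h2 : HasDerivAt (fun y : ℝ => y ^ 2 / 2) ((2 : ℕ) * y ^ 1 / 2) y :=
      (hasDerivAt_pow 2 y).div_const 2
    have h3 : HasDerivAt (fun y : ℝ => Real.exp (-y)) (Real.exp (-y) * (-1)) y :=
      (Real.hasDerivAt_exp (-y)).comp y (hasDerivAt_neg y)
    have := (h1.add h2).sub h3
    exact this.congr_deriv (by ring)
  have hmono : MonotoneOn g (Set.Ici (0 : ℝ)) := by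
    apply monotoneOn_of_deriv_nonneg (convex_Ici 0)
    · exact fun y _ => ((hderiv y).continuousAt).continuousWithinAt
    · exact fun y _ => ((hderiv y).differentiableAt).differentiableWithinAt
    · intro y hy
      rw [(hderiv y).deriv]
      have := Real.add_one_le_exp (-y)
      linarith
  have h0 : g 0 = 0 := by simp [hg]
  have := hmono (Set.self_mem_Ici) (Set.mem_Ici.2 hx) hx
  rw [h0] at this
  simp only [hg] at this
  linarith

lemma iIndepFun_ae_eq' {Ω : Type*} {mΩ : MeasurableSpace Ω} {μ : Measure Ω}
    {n : ℕ} {X Y : Fin n → Ω → ℝ}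
    (h : iIndepFun X μ)
    (hXY : ∀ i, X i =ᵐ[μ] Y i) :
    iIndepFun Y μ := by
  rw [iIndepFun_iff_measure_inter_preimage_eq_mul] at h ⊢
  intro S sets hsets
  have hall : ∀ᵐ ω ∂μ, ∀ i, X i ω = Y i ω := ae_all_iff.2 hXY
  have hpre : ∀ i : Fin n, (X i ⁻¹' sets i : Set Ω) =ᵐ[μ] (Y i ⁻¹' sets i : Set Ω) := by
    intro i
    rw [Filter.eventuallyEq_set]
    filter_upwards [hXY i] with ω hω
    simp only [Set.mem_preimage, hω]
  have hInter : (⋂ i ∈ S, X i ⁻¹' sets i : Set Ω) =ᵐ[μ] (⋂ i ∈ S, Y i ⁻¹' sets i : Set Ω) := by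
    rw [Filter.eventuallyEq_set]
    filter_upwards [hall] with ω hω
    simp only [Set.mem_iInter, Set.mem_preimage]
    constructor <;> intro hmem j hj
    · rw [← hω j]; exact hmem j hj
    · rw [hω j]; exact hmem j hj
  rw [← measure_congr hInter, h S hsets]
  exact Finset.prod_congr rfl fun i _ => measure_congr (hpre i)

/-- Maurer's lower-tail Bernstein-type inequality for sums of independent positive
random variables with finite second moments. -/
theorem maurer_inequality {Ω : Type*} {mΩ : MeasurableSpace Ω}
    (μ : Measure Ω) [IsProbabilityMeasure μ]
    (n : ℕ) (X : Fin n → Ω → ℝ)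
    (hindep : iIndepFun X μ)
    (hpos : ∀ i, ∀ᵐ ω ∂μ, 0 < X i ω)
    (hL2 : ∀ i, MemLp (X i) 2 μ)
    (t : ℝ) (ht : 0 < t) :
    μ {ω | ∑ i, X i ω ≤ (∑ i, ∫ ω, X i ω ∂μ) - t} ≤
      ENNReal.ofReal (Real.exp (-(t ^ 2) / (2 * ∑ i, ∫ ω, (X i ω) ^ 2 ∂μ))) := by
  rcases Nat.eq_zero_or_pos n with hn | hn
  · subst hn
    have : {ω : Ω | ∑ i : Fin 0, X i ω ≤ (∑ i : Fin 0, ∫ ω, X i ω ∂μ) - t} = ∅ := by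
      ext ω; simp; linarith
    rw [this]
    simp
  -- measurable versions
  set Y : Fin n → Ω → ℝ := fun i => ((hL2 i).1.mk (X i)) with hY
  have hXY : ∀ i, X i =ᵐ[μ] Y i := fun i => (hL2 i).1.ae_eq_mk
  have hYmeas : ∀ i, Measurable (Y i) := fun i => ((hL2 i).1.stronglyMeasurable_mk).measurable
  have hindepY : iIndepFun Y μ := iIndepFun_ae_eq' hindep hXY
  have hposY : ∀ i, ∀ᵐ ω ∂μ, 0 < Y i ω := fun i => by
    filter_upwards [hpos i, hXY i] with ω h1 h2; rwa [← h2]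
  have hL2Y : ∀ i, MemLp (Y i) 2 μ := fun i => (hL2 i).ae_eq (hXY i)
  have hintY : ∀ i, Integrable (Y i) μ :=
    fun i => (hL2Y i).integrable (by norm_num)
  have hintY2 : ∀ i, Integrable (fun ω => Y i ω ^ 2) μ := fun i => (hL2Y i).integrable_sq
  -- rewrite integrals
  have hmX : ∀ i, ∫ ω, X i ω ∂μ = ∫ ω, Y i ω ∂μ := fun i => integral_congr_ae (hXY i)
  have hvX : ∀ i, ∫ ω, (X i ω) ^ 2 ∂μ = ∫ ω, Y i ω ^ 2 ∂μ := fun i =>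
    integral_congr_ae (by filter_upwards [hXY i] with ω hω; rw [hω])
  set a : Fin n → ℝ := fun i => ∫ ω, Y i ω ∂μ with ha
  set b : Fin n → ℝ := fun i => ∫ ω, Y i ω ^ 2 ∂μ with hb
  set m : ℝ := ∑ i, a i with hm
  set σ2 : ℝ := ∑ i, b i with hσ2
  have hb_nonneg : ∀ i, 0 ≤ b i := fun i =>
    integral_nonneg fun ω => sq_nonneg _
  haveI : (ae μ).NeBot := ae_neBot.mpr (IsProbabilityMeasure.ne_zero μ)
  have hb_pos : ∀ i, 0 < b i := by
    intro i
    rcases (hb_nonneg i).lt_or_eq with h | h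
    · exact h
    · exfalso
      have h0 : ∫ ω, Y i ω ^ 2 ∂μ = 0 := h.symm
      rw [integral_eq_zero_iff_of_nonneg_ae (ae_of_all _ fun ω => sq_nonneg _) (hintY2 i)] at h0
      obtain ⟨ω, h1, h2⟩ := ((hposY i).and h0).exists
      simp only [Pi.zero_apply] at h2
      nlinarith
  have hσ2_pos : 0 < σ2 := by
    have i0 : Fin n := ⟨0, hn⟩
    exact Finset.sum_pos (fun i _ => hb_pos i) ⟨i0, Finset.mem_univ i0⟩
  set s : ℝ := t / σ2 with hs_def
  have hs : 0 < s := div_pos ht hσ2_pos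
  -- integrability of exponentials
  have hexp_int : ∀ i, Integrable (fun ω => Real.exp (-s * Y i ω)) μ := by
    intro i
    refine Integrable.mono' (integrable_const (1 : ℝ))
      (((hYmeas i).const_mul (-s)).exp.aestronglyMeasurable) ?_
    filter_upwards [hposY i] with ω hω
    rw [Real.norm_eq_abs, abs_of_pos (Real.exp_pos _), Real.exp_le_one_iff]
    nlinarith
  have hsum_exp_int : Integrable (fun ω => Real.exp (-s * (∑ i, Y i) ω)) μ := by
    refine Integrable.mono' (integrable_const (1 : ℝ)) ?_ ?_
    · have heq : (fun ω => Real.exp (-s * (∑ i, Y i) ω)) =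
          fun ω => Real.exp (-s * ∑ i, Y i ω) := by
        funext ω; rw [Finset.sum_apply]
      rw [heq]
      exact ((Finset.measurable_sum Finset.univ fun i _ => hYmeas i).const_mul
        (-s)).exp.aestronglyMeasurable
    · have hall : ∀ᵐ ω ∂μ, ∀ i, 0 < Y i ω := ae_all_iff.2 hposY
      filter_upwards [hall] with ω hω
      rw [Real.norm_eq_abs, abs_of_pos (Real.exp_pos _), Real.exp_le_one_iff]
      have : 0 ≤ (∑ i, Y i) ω := by
        rw [Finset.sum_apply]
        exact Finset.sum_nonneg fun i _ => (hω i).le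
      nlinarith
  -- Chernoff
  have hchernoff := measure_le_le_exp_mul_mgf (μ := μ) (X := ∑ i, Y i) (m - t)
    (neg_nonpos_of_nonneg hs.le) hsum_exp_int
  -- mgf of sum = product
  have hmgf_sum : mgf (∑ i, Y i) μ (-s) = ∏ i, mgf (Y i) μ (-s) :=
    hindepY.mgf_sum hYmeas Finset.univ
  -- bound each mgf
  have hmgf_bound : ∀ i, mgf (Y i) μ (-s) ≤ Real.exp (-s * a i + s ^ 2 * b i / 2) := by
    intro i
    have h1 : mgf (Y i) μ (-s) ≤ 1 - s * a i + s ^ 2 * b i / 2 := by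
      have hle : (fun ω => Real.exp (-s * Y i ω)) ≤ᵐ[μ]
          fun ω => 1 - s * Y i ω + (s * Y i ω) ^ 2 / 2 := by
        filter_upwards [hposY i] with ω hω
        have := exp_neg_le_quadratic (x := s * Y i ω) (by positivity)
        rw [← neg_mul] at this
        exact this
      have hint_rhs : Integrable (fun ω => 1 - s * Y i ω + (s * Y i ω) ^ 2 / 2) μ := by
        have : (fun ω => 1 - s * Y i ω + (s * Y i ω) ^ 2 / 2) =
            fun ω => 1 - s * Y i ω + s ^ 2 / 2 * Y i ω ^ 2 := by
          funext ω; ring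
        rw [this]
        exact ((integrable_const 1).sub ((hintY i).const_mul s)).add
          ((hintY2 i).const_mul (s ^ 2 / 2))
      calc mgf (Y i) μ (-s) = ∫ ω, Real.exp (-s * Y i ω) ∂μ := rfl
        _ ≤ ∫ ω, (1 - s * Y i ω + (s * Y i ω) ^ 2 / 2) ∂μ :=
            integral_mono_ae (hexp_int i) hint_rhs hle
        _ = 1 - s * a i + s ^ 2 * b i / 2 := by
            have heq : (fun ω => 1 - s * Y i ω + (s * Y i ω) ^ 2 / 2) =
                fun ω => 1 - s * Y i ω + s ^ 2 / 2 * Y i ω ^ 2 := by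
              funext ω; ring
            have i1 : Integrable (fun ω => 1 - s * Y i ω) μ :=
              (integrable_const 1).sub ((hintY i).const_mul s)
            have i2 : Integrable (fun ω => s ^ 2 / 2 * Y i ω ^ 2) μ :=
              (hintY2 i).const_mul _
            have i3 : Integrable (fun _ : Ω => (1 : ℝ)) μ := integrable_const 1
            have i4 : Integrable (fun ω => s * Y i ω) μ := (hintY i).const_mul s
            rw [heq, integral_add i1 i2, integral_sub i3 i4, integral_const_mul,
              integral_const_mul, integral_const]
            simp only [probReal_univ, ENNReal.toReal_one, smul_eq_mul, mul_one, one_mul]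
            simp only [ha, hb]
            ring
    refine h1.trans ?_
    have := Real.add_one_le_exp (-s * a i + s ^ 2 * b i / 2)
    linarith
  -- combine
  have hprod : ∏ i, mgf (Y i) μ (-s) ≤ Real.exp (-s * m + s ^ 2 * σ2 / 2) := by
    calc ∏ i, mgf (Y i) μ (-s)
        ≤ ∏ i, Real.exp (-s * a i + s ^ 2 * b i / 2) :=
          Finset.prod_le_prod (fun i _ => mgf_nonneg) (fun i _ => hmgf_bound i)
      _ = Real.exp (∑ i, (-s * a i + s ^ 2 * b i / 2)) := (Real.exp_sum _ _).symm
      _ = Real.exp (-s * m + s ^ 2 * σ2 / 2) := by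
          rw [Finset.sum_add_distrib, ← Finset.mul_sum, ← hm]
          congr 1
          rw [← Finset.sum_div, ← Finset.mul_sum, ← hσ2]
  -- final real bound
  have hreal : (μ {ω | (∑ i, Y i) ω ≤ m - t}).toReal ≤
      Real.exp (-(t ^ 2) / (2 * σ2)) := by
    refine hchernoff.trans ?_
    rw [hmgf_sum]
    calc Real.exp (-(-s) * (m - t)) * ∏ i, mgf (Y i) μ (-s)
        ≤ Real.exp (-(-s) * (m - t)) * Real.exp (-s * m + s ^ 2 * σ2 / 2) := by
          exact mul_le_mul_of_nonneg_left hprod (Real.exp_pos _).le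
      _ = Real.exp (s * (m - t) + (-s * m + s ^ 2 * σ2 / 2)) := by
          rw [← Real.exp_add]; ring_nf
      _ = Real.exp (-(t ^ 2) / (2 * σ2)) := by
          congr 1
          rw [hs_def]
          field_simp
          ring
  -- sets are a.e. equal
  have hset : μ {ω | ∑ i, X i ω ≤ (∑ i, ∫ ω, X i ω ∂μ) - t} =
      μ {ω | (∑ i, Y i) ω ≤ m - t} := by
    apply measure_congr
    rw [Filter.eventuallyEq_set]
    have hall : ∀ᵐ ω ∂μ, ∀ i, X i ω = Y i ω := ae_all_iff.2 hXY
    filter_upwards [hall] with ω hω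
    simp only [Set.mem_setOf_eq, Finset.sum_apply]
    have h1 : ∑ i, X i ω = ∑ i, Y i ω := Finset.sum_congr rfl fun i _ => hω i
    have h2 : (∑ i, ∫ ω, X i ω ∂μ) = m := Finset.sum_congr rfl fun i _ => hmX i
    rw [h1, h2]
  rw [hset]
  have h2 : (2 : ℝ) * ∑ i, ∫ ω, (X i ω) ^ 2 ∂μ = 2 * σ2 := by
    congr 1
    exact Finset.sum_congr rfl fun i _ => hvX i
  rw [h2]
  rw [ENNReal.le_ofReal_iff_toReal_le (measure_ne_top μ _) (Real.exp_pos _).le]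
  exact hreal
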